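/- If κ ∈ Γ_m^+ with κ_1 ≥ ⋯ ≥ κ_n, then κ_i ≥ 0 for all 1 ≤ i ≤ m (the m largest entries are nonnegative). -/

import Mathlib

open Finset

noncomputable def esym {n : ℕ} (m : ℕ) (κ : Fin n → ℝ) : ℝ :=
  ∑ s ∈ Finset.powersetCard m (Finset.univ : Finset (Fin n)), ∏ i ∈ s, κ i

/-- Elementary symmetric polynomial of the restriction of `κ` to a finset `s`. -/
noncomputable def E {n : ℕ} (κ : Fin n → ℝ) (s : Finset (Fin n)) (j : ℕ) : ℝ :=
  ∑ t ∈ Finset.powersetCard j s, ∏ i ∈ t, κ i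

lemma E_zero {n : ℕ} (κ : Fin n → ℝ) (s : Finset (Fin n)) : E κ s 0 = 1 := by
  simp [E]

lemma E_insert {n : ℕ} (κ : Fin n → ℝ) {a : Fin n} {s : Finset (Fin n)} (ha : a ∉ s) (j : ℕ) :
    E κ (insert a s) (j + 1) = E κ s (j + 1) + κ a * E κ s j := by
  classical
  rw [E, powersetCard_succ_insert ha, sum_union, E, E, mul_sum]
  · congr 1
    rw [sum_image]
    · refine sum_congr rfl fun t ht => ?_
      exact prod_insert (fun h => ha ((mem_powersetCard.mp ht).1 h))
    · intro t ht u hu h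
      have hat : a ∉ t := fun h' => ha ((mem_powersetCard.mp ht).1 h')
      have hau : a ∉ u := fun h' => ha ((mem_powersetCard.mp hu).1 h')
      have := congrArg (fun v => Finset.erase v a) h
      simpa [Finset.erase_insert hat, Finset.erase_insert hau] using this
  · refine Finset.disjoint_left.mpr fun t ht ht' => ?_
    have hat : a ∉ t := fun h' => ha ((mem_powersetCard.mp ht).1 h')
    rcases Finset.mem_image.mp ht' with ⟨u, _, rfl⟩
    exact hat (Finset.mem_insert_self a u)

lemma prod_neg_eq {n : ℕ} (κ : Fin n → ℝ) (t : Finset (Fin n)) :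
    ∏ i ∈ t, (-κ i) = (-1 : ℝ) ^ t.card * ∏ i ∈ t, κ i := by
  classical
  induction t using Finset.induction_on with
  | empty => simp
  | insert x t hx ih =>
    rw [prod_insert hx, prod_insert hx, card_insert_of_notMem hx, ih, pow_succ]
    ring

lemma prod_sub_eq_sum {n : ℕ} (κ : Fin n → ℝ) (c : ℝ) (s : Finset (Fin n)) :
    ∏ i ∈ s, (c - κ i) =
      ∑ j ∈ Finset.range (s.card + 1), ((-1 : ℝ) ^ j * E κ s j) * c ^ (s.card - j) := by
  classical
  have h1 : ∏ i ∈ s, (c - κ i) = ∏ i ∈ s, ((-κ i) + c) := by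
    refine prod_congr rfl fun i _ => by ring
  rw [h1, prod_add, powerset_card_disjiUnion]; refine (sum_disjiUnion _ _ _).trans ?_
  refine sum_congr rfl fun j hj => ?_
  rw [E, mul_comm ((-1 : ℝ) ^ j) _, sum_mul, sum_mul]
  refine sum_congr rfl fun t ht => ?_
  obtain ⟨hts, htc⟩ := mem_powersetCard.mp ht
  have hprod : ∏ i ∈ t, (-κ i) = (-1 : ℝ) ^ j * ∏ i ∈ t, κ i := by
    rw [← htc]; exact prod_neg_eq κ t
  rw [hprod, prod_const, card_sdiff_of_subset hts, htc]
  ring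

lemma key_aux {n m : ℕ} (hm : 1 ≤ m) (κ : Fin n → ℝ)
    (hsort : ∀ i j : Fin n, i ≤ j → κ j ≤ κ i) (i : Fin n) (hi : (i : ℕ) < m)
    (hneg : κ i < 0) :
    ∀ N (s : Finset (Fin n)), s.card = N → i ∈ s → m ≤ s.card →
      (∀ j, 1 ≤ j → j ≤ m → 0 < E κ s j) → False := by
  classical
  intro N
  induction N using Nat.strong_induction_on with
  | _ N IH =>
  intro s hN his hcard hpos
  have hsne : s.Nonempty := ⟨i, his⟩
  set a := s.max' hsne with ha_def
  have ha_mem : a ∈ s := s.max'_mem hsne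
  have h_le_a : ∀ x ∈ s, x ≤ a := fun x hx => s.le_max' x hx
  have h_card_le : s.card ≤ (a : ℕ) + 1 := by
    have hsub : s ⊆ Finset.Iic a := fun x hx => Finset.mem_Iic.mpr (h_le_a x hx)
    calc s.card ≤ (Finset.Iic a).card := card_le_card hsub
    _ = (a : ℕ) + 1 := Fin.card_Iic a
  have hia : i ≤ a := h_le_a i his
  have hκa : κ a < 0 := lt_of_le_of_lt (hsort i a hia) hneg
  rcases eq_or_lt_of_le hcard with hEq | hLt
  · -- s.card = m : Vieta sign argument
    have hzero : ∏ l ∈ s, (κ a - κ l) = 0 :=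
      Finset.prod_eq_zero ha_mem (by simp)
    set d : ℝ := -κ a with hd_def
    have hd : 0 < d := by simp [hd_def]; linarith
    have hEj : ∀ j ∈ Finset.range (s.card + 1), 0 < E κ s j := by
      intro j hj
      have hjle : j ≤ s.card := Nat.lt_succ_iff.mp (Finset.mem_range.mp hj)
      rcases Nat.eq_zero_or_pos j with rfl | hj1
      · rw [E_zero]; norm_num
      · exact hpos j hj1 (by omega)
    have hsum_pos : 0 < ∑ j ∈ Finset.range (s.card + 1), E κ s j * d ^ (s.card - j) := by
      refine Finset.sum_pos (fun j hj => ?_) ⟨0, by simp⟩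
      exact mul_pos (hEj j hj) (pow_pos hd _)
    have hmain : ∏ l ∈ s, (κ a - κ l) =
        (-1 : ℝ) ^ s.card * ∑ j ∈ Finset.range (s.card + 1), E κ s j * d ^ (s.card - j) := by
      rw [prod_sub_eq_sum κ (κ a) s, Finset.mul_sum]
      refine sum_congr rfl fun j hj => ?_
      have hjle : j ≤ s.card := Nat.lt_succ_iff.mp (Finset.mem_range.mp hj)
      have hκad : κ a = -d := by simp [hd_def]
      rw [hκad, neg_pow d (s.card - j)]
      have : (-1 : ℝ) ^ j * (-1 : ℝ) ^ (s.card - j) = (-1 : ℝ) ^ s.card := by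
        rw [← pow_add, Nat.add_sub_cancel' hjle]
      ring_nf
      rw [← this]
      ring
    rw [hzero] at hmain
    have : (0 : ℝ) ≠ 0 := by
      nth_rewrite 1 [hmain]
      rcases Nat.even_or_odd s.card with he | ho
      · rw [he.neg_one_pow]; positivity
      · rw [ho.neg_one_pow]; nlinarith
    exact this rfl
  · -- s.card > m : remove the max element
    set s' := s.erase a with hs'_def
    have ha_ge : s.card - 1 ≤ (a : ℕ) := by omega
    have hia' : (i : ℕ) < (a : ℕ) := by omega
    have hine : i ≠ a := fun h => by simp [h] at hia'
    have his' : i ∈ s' := Finset.mem_erase.mpr ⟨hine, his⟩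
    have hans' : a ∉ s' := Finset.notMem_erase a s
    have hins : s = insert a s' := by
      rw [hs'_def, Finset.insert_erase ha_mem]
    have hcard' : s'.card = s.card - 1 := Finset.card_erase_of_mem ha_mem
    -- positivity transfers to s'
    have hpos' : ∀ j, j ≤ m → 0 < E κ s' j := by
      intro j
      induction j with
      | zero => intro _; rw [E_zero]; norm_num
      | succ k ihk =>
        intro hk
        have hEk : 0 < E κ s' k := ihk (by omega)
        have hEs : 0 < E κ s (k + 1) := hpos (k + 1) (by omega) hk
        have hrec : E κ s (k + 1) = E κ s' (k + 1) + κ a * E κ s' k := by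
          rw [hins]; exact E_insert κ hans' k
        nlinarith
    exact IH s'.card (by omega) s' rfl his' (by omega) (fun j h1 h2 => hpos' j h2)

/-- If κ ∈ Γ_m^+ with entries ordered decreasingly, the m largest entries are nonnegative. -/
theorem stmt_5 {n : ℕ} (m : ℕ) (hm : 1 ≤ m) (hmn : m ≤ n)
    (κ : Fin n → ℝ) (hΓ : ∀ j, 1 ≤ j → j ≤ m → 0 < esym j κ)
    (hsort : ∀ i j : Fin n, i ≤ j → κ j ≤ κ i) :
    ∀ i : Fin n, (i : ℕ) < m → 0 ≤ κ i := by
  classical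
  intro i hi
  by_contra hneg
  push_neg at hneg
  have hE : ∀ j, 1 ≤ j → j ≤ m → 0 < E κ Finset.univ j := by
    intro j h1 h2
    have := hΓ j h1 h2
    simpa [esym, E] using this
  exact key_aux hm κ hsort i hi hneg Finset.univ.card Finset.univ rfl
    (Finset.mem_univ i) (by simpa using hmn) hE
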